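/- For every vector c ∈ ℝ^n and every admissible control u, one has cᵀ x(T; u) ≤ cᵀ x(T; u*(·; c)); consequently, cᵀ x(T; u*(·; c)) = sup { cᵀ q : q ∈ R(T) }, i.e., the endpoint of the bang-bang control u*(·; c) maximizes the linear functional q ↦ cᵀ q over the reachable set. -/

import Mathlib

open MeasureTheory Matrix

/-- Matrix exponential. -/
noncomputable def mexp {n : ℕ} (M : Matrix (Fin n) (Fin n) ℝ) : Matrix (Fin n) (Fin n) ℝ :=
  NormedSpace.exp M

/-- State reached from the origin at time `T`: `x(T;u) = ∫_{t₀}^{T} e^{A(T−t)} B u(t) dt`. -/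
noncomputable def endpoint {n m : ℕ} (A : Matrix (Fin n) (Fin n) ℝ)
    (B : Matrix (Fin n) (Fin m) ℝ) (t₀ T : ℝ) (u : ℝ → Fin m → ℝ) : Fin n → ℝ :=
  ∫ t in t₀..T, (mexp ((T - t) • A)).mulVec (B.mulVec (u t))

/-- Admissible control: measurable with componentwise bounds `u̲ ≤ u(t) ≤ ū` on `[t₀,T]`. -/
def Admissible {m : ℕ} (t₀ T : ℝ) (ulo uhi : Fin m → ℝ) (u : ℝ → Fin m → ℝ) : Prop :=
  Measurable u ∧ ∀ t ∈ Set.Icc t₀ T, ∀ i, ulo i ≤ u t i ∧ u t i ≤ uhi i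

/-- Reachable set at time `T` from the origin. -/
def ReachSet {n m : ℕ} (A : Matrix (Fin n) (Fin n) ℝ) (B : Matrix (Fin n) (Fin m) ℝ)
    (t₀ T : ℝ) (ulo uhi : Fin m → ℝ) : Set (Fin n → ℝ) :=
  {x | ∃ u, Admissible t₀ T ulo uhi u ∧ x = endpoint A B t₀ T u}

/-- `ψ(t;c) = Bᵀ e^{Aᵀ(T−t)} c`. -/
noncomputable def psi {n m : ℕ} (A : Matrix (Fin n) (Fin n) ℝ)
    (B : Matrix (Fin n) (Fin m) ℝ) (T : ℝ) (c : Fin n → ℝ) (t : ℝ) : Fin m → ℝ :=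
  Bᵀ.mulVec ((mexp ((T - t) • Aᵀ)).mulVec c)

/-- Bang-bang control: `u*_i(t) = ū_i` if `ψ_i(t;c) ≥ 0`, else `u̲_i`. -/
noncomputable def bang {n m : ℕ} (A : Matrix (Fin n) (Fin n) ℝ)
    (B : Matrix (Fin n) (Fin m) ℝ) (T : ℝ) (ulo uhi : Fin m → ℝ)
    (c : Fin n → ℝ) (t : ℝ) (i : Fin m) : ℝ :=
  if 0 ≤ psi A B T c t i then uhi i else ulo i

lemma mexp_cont {n : ℕ} (A : Matrix (Fin n) (Fin n) ℝ) (T : ℝ) :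
    Continuous fun t : ℝ => mexp ((T - t) • A) := by
  letI : NormedRing (Matrix (Fin n) (Fin n) ℝ) := Matrix.linftyOpNormedRing
  letI : NormedAlgebra ℝ (Matrix (Fin n) (Fin n) ℝ) := Matrix.linftyOpNormedAlgebra
  letI : NormedAlgebra ℚ (Matrix (Fin n) (Fin n) ℝ) := .restrictScalars ℚ ℝ _
  exact NormedSpace.exp_continuous.comp
    ((continuous_const.sub continuous_id).smul continuous_const)

lemma mexp_transpose {n : ℕ} (A : Matrix (Fin n) (Fin n) ℝ) (s : ℝ) :
    mexp (s • Aᵀ) = (mexp (s • A))ᵀ := by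
  rw [mexp, mexp, ← Matrix.transpose_smul, Matrix.exp_transpose]

lemma key_identity {n m : ℕ} (A : Matrix (Fin n) (Fin n) ℝ)
    (B : Matrix (Fin n) (Fin m) ℝ) (T : ℝ) (c : Fin n → ℝ) (t : ℝ) (v : Fin m → ℝ) :
    c ⬝ᵥ (mexp ((T - t) • A)).mulVec (B.mulVec v) = psi A B T c t ⬝ᵥ v := by
  rw [psi, mexp_transpose, Matrix.dotProduct_mulVec, Matrix.dotProduct_mulVec,
    Matrix.mulVec_transpose, Matrix.mulVec_transpose, Matrix.vecMul_vecMul]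

lemma psi_cont {n m : ℕ} (A : Matrix (Fin n) (Fin n) ℝ)
    (B : Matrix (Fin n) (Fin m) ℝ) (T : ℝ) (c : Fin n → ℝ) :
    Continuous fun t => psi A B T c t := by
  exact Continuous.matrix_mulVec continuous_const
    (Continuous.matrix_mulVec (mexp_cont Aᵀ T) continuous_const)

lemma bang_meas {n m : ℕ} (A : Matrix (Fin n) (Fin n) ℝ)
    (B : Matrix (Fin n) (Fin m) ℝ) (T : ℝ) (ulo uhi : Fin m → ℝ) (c : Fin n → ℝ) :
    Measurable (fun t i => if 0 ≤ psi A B T c t i then uhi i else ulo i : ℝ → Fin m → ℝ) := by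
  refine measurable_pi_lambda _ fun i => Measurable.ite ?_ measurable_const measurable_const
  exact measurableSet_le measurable_const ((continuous_pi_iff.mp (psi_cont A B T c) i).measurable)

lemma F_integrable {n m : ℕ} (A : Matrix (Fin n) (Fin n) ℝ) (B : Matrix (Fin n) (Fin m) ℝ)
    (t₀ T : ℝ) (ht : t₀ ≤ T) (u : ℝ → Fin m → ℝ) (hu : Measurable u)
    (C : ℝ) (hC : 0 ≤ C) (hb : ∀ t ∈ Set.Ioc t₀ T, ∀ j, |u t j| ≤ C) :
    IntervalIntegrable (fun t => (mexp ((T - t) • A)).mulVec (B.mulVec (u t))) volume t₀ T := by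
  rw [intervalIntegrable_iff_integrableOn_Ioc_of_le ht]
  set g : ℝ → Matrix (Fin n) (Fin m) ℝ := fun t => mexp ((T - t) • A) * B with hg
  have hgc : Continuous g := (mexp_cont A T).matrix_mul continuous_const
  have hgec : ∀ i j, Continuous fun t => g t i j := fun i j =>
    (continuous_apply j).comp ((continuous_apply i).comp hgc)
  have hFdef : ∀ t, (mexp ((T - t) • A)).mulVec (B.mulVec (u t)) = (g t).mulVec (u t) :=
    fun t => (Matrix.mulVec_mulVec (u t) _ B)
  have hhc : Continuous fun t => ∑ i : Fin n, ∑ j : Fin m, |g t i j| := by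
    refine continuous_finset_sum _ fun i _ => continuous_finset_sum _ fun j _ => (hgec i j).abs
  obtain ⟨K, hK⟩ := isCompact_Icc.exists_bound_of_continuousOn
    (s := Set.Icc t₀ T) hhc.continuousOn
  have hgK : ∀ t ∈ Set.Icc t₀ T, ∀ i j, |g t i j| ≤ K := by
    intro t htm i j
    calc |g t i j| ≤ ∑ j' : Fin m, |g t i j'| :=
          Finset.single_le_sum (f := fun j' => |g t i j'|)
            (fun j' _ => abs_nonneg _) (Finset.mem_univ j)
      _ ≤ ∑ i' : Fin n, ∑ j' : Fin m, |g t i' j'| :=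
          Finset.single_le_sum (f := fun i' => ∑ j' : Fin m, |g t i' j'|)
            (fun i' _ => Finset.sum_nonneg fun _ _ => abs_nonneg _) (Finset.mem_univ i)
      _ ≤ ‖∑ i' : Fin n, ∑ j' : Fin m, |g t i' j'|‖ := le_abs_self _
      _ ≤ K := hK t htm
  have hK0 : 0 ≤ K := le_trans (norm_nonneg _) (hK t₀ (Set.left_mem_Icc.mpr ht))
  have hmeas : Measurable fun t => (g t).mulVec (u t) := by
    refine measurable_pi_lambda _ fun i => ?_
    simp only [Matrix.mulVec, dotProduct]
    exact Finset.measurable_sum _ fun j _ =>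
      ((hgec i j).measurable).mul ((measurable_pi_apply j).comp hu)
  simp only [hFdef]
  refine Integrable.mono' (g := fun _ => (m : ℝ) * (K * C))
    ((integrableOn_const_iff (by finiteness)).mpr (Or.inr measure_Ioc_lt_top))
    (hmeas.aestronglyMeasurable) ?_
  · filter_upwards [ae_restrict_mem measurableSet_Ioc] with t htm
    rw [pi_norm_le_iff_of_nonneg (by positivity)]
    intro i
    rw [Real.norm_eq_abs]
    calc |((g t).mulVec (u t)) i| ≤ ∑ j : Fin m, |g t i j * u t j| := by
          rw [Matrix.mulVec, dotProduct]
          exact Finset.abs_sum_le_sum_abs _ _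
      _ ≤ ∑ _j : Fin m, K * C := by
          refine Finset.sum_le_sum fun j _ => ?_
          rw [abs_mul]
          exact mul_le_mul (hgK t (Set.Ioc_subset_Icc_self htm) i j) (hb t htm j)
            (abs_nonneg _) hK0
      _ = (m : ℝ) * (K * C) := by simp [Finset.sum_const, mul_comm]

noncomputable def dotCLM {n : ℕ} (c : Fin n → ℝ) : (Fin n → ℝ) →L[ℝ] ℝ :=
  ∑ i : Fin n, c i • ContinuousLinearMap.proj i

lemma dotCLM_apply {n : ℕ} (c v : Fin n → ℝ) : dotCLM c v = c ⬝ᵥ v := by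
  simp [dotCLM, dotProduct, ContinuousLinearMap.sum_apply]

lemma endpoint_dot {n m : ℕ} (A : Matrix (Fin n) (Fin n) ℝ) (B : Matrix (Fin n) (Fin m) ℝ)
    (t₀ T : ℝ) (c : Fin n → ℝ) (u : ℝ → Fin m → ℝ)
    (hint : IntervalIntegrable (fun t => (mexp ((T - t) • A)).mulVec (B.mulVec (u t)))
      volume t₀ T) :
    c ⬝ᵥ endpoint A B t₀ T u = ∫ t in t₀..T, psi A B T c t ⬝ᵥ u t := by
  rw [endpoint, ← dotCLM_apply, ← ContinuousLinearMap.intervalIntegral_comp_comm _ hint]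
  exact intervalIntegral.integral_congr fun t _ => by
    rw [dotCLM_apply, key_identity]

/-- For every `c` and every admissible control `u`, `cᵀ x(T;u) ≤ cᵀ x(T;u*(·;c))`;
consequently the endpoint of the bang-bang control maximizes `q ↦ cᵀ q` over `R(T)`. -/
theorem bang_bang_maximizes_linear_functional {n m : ℕ}
    (A : Matrix (Fin n) (Fin n) ℝ) (B : Matrix (Fin n) (Fin m) ℝ)
    (t₀ T : ℝ) (ht : t₀ < T) (ulo uhi : Fin m → ℝ) (hbnd : ulo ≤ uhi)
    (c : Fin n → ℝ) :
    (∀ u, Admissible t₀ T ulo uhi u →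
        c ⬝ᵥ endpoint A B t₀ T u ≤ c ⬝ᵥ endpoint A B t₀ T (bang A B T ulo uhi c)) ∧
      c ⬝ᵥ endpoint A B t₀ T (bang A B T ulo uhi c)
        = sSup ((fun q => c ⬝ᵥ q) '' ReachSet A B t₀ T ulo uhi) := by
  set C : ℝ := ‖ulo‖ + ‖uhi‖ with hCdef
  have hC : 0 ≤ C := by positivity
  have habs : ∀ (u : ℝ → Fin m → ℝ), (∀ t ∈ Set.Icc t₀ T, ∀ i, ulo i ≤ u t i ∧ u t i ≤ uhi i) →
      ∀ t ∈ Set.Ioc t₀ T, ∀ j, |u t j| ≤ C := by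
    intro u hb t htm j
    have h1 := (hb t (Set.Ioc_subset_Icc_self htm) j).1
    have h2 := (hb t (Set.Ioc_subset_Icc_self htm) j).2
    have hl : |ulo j| ≤ ‖ulo‖ := by
      simpa [Real.norm_eq_abs] using norm_le_pi_norm ulo j
    have hh : |uhi j| ≤ ‖uhi‖ := by
      simpa [Real.norm_eq_abs] using norm_le_pi_norm uhi j
    rw [abs_le]
    constructor
    · calc -C ≤ -‖ulo‖ := by simp [hCdef]
        _ ≤ ulo j := by linarith [neg_abs_le (ulo j)]
        _ ≤ u t j := h1
    · calc u t j ≤ uhi j := h2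
        _ ≤ ‖uhi‖ := le_trans (le_abs_self _) hh
        _ ≤ C := by simp [hCdef]
  have hbangAdm : Admissible t₀ T ulo uhi (bang A B T ulo uhi c) := by
    refine ⟨bang_meas A B T ulo uhi c, fun t _ i => ?_⟩
    by_cases h : 0 ≤ psi A B T c t i <;> simp [bang, h, hbnd i, le_refl]
  have hintOf : ∀ (u : ℝ → Fin m → ℝ), Admissible t₀ T ulo uhi u →
      IntervalIntegrable (fun t => (mexp ((T - t) • A)).mulVec (B.mulVec (u t)))
        volume t₀ T := fun u hu =>
    F_integrable A B t₀ T ht.le u hu.1 C hC (habs u hu.2)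
  have hmain : ∀ u, Admissible t₀ T ulo uhi u →
      c ⬝ᵥ endpoint A B t₀ T u ≤ c ⬝ᵥ endpoint A B t₀ T (bang A B T ulo uhi c) := by
    intro u hu
    have hiu := hintOf u hu
    have hib := hintOf _ hbangAdm
    rw [endpoint_dot A B t₀ T c u hiu, endpoint_dot A B t₀ T c _ hib]
    have hscalar : ∀ (v : ℝ → Fin m → ℝ),
        IntervalIntegrable (fun t => (mexp ((T - t) • A)).mulVec (B.mulVec (v t))) volume t₀ T →
        IntervalIntegrable (fun t => psi A B T c t ⬝ᵥ v t) volume t₀ T := by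
      intro v hv
      have heq : (fun t => psi A B T c t ⬝ᵥ v t)
          = fun t => dotCLM c ((mexp ((T - t) • A)).mulVec (B.mulVec (v t))) :=
        funext fun t => by rw [dotCLM_apply, key_identity]
      rw [heq]
      exact ⟨(dotCLM c).integrable_comp hv.1, (dotCLM c).integrable_comp hv.2⟩
    refine intervalIntegral.integral_mono_on ht.le (hscalar u hiu) (hscalar _ hib) ?_
    intro t htIcc
    refine Finset.sum_le_sum fun i _ => ?_
    by_cases h : 0 ≤ psi A B T c t i
    · simp only [bang, if_pos h]
      exact mul_le_mul_of_nonneg_left (hu.2 t htIcc i).2 h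
    · simp only [bang, if_neg h]
      exact mul_le_mul_of_nonpos_left (hu.2 t htIcc i).1 (le_of_not_ge h)
  refine ⟨hmain, ?_⟩
  refine (IsGreatest.csSup_eq ⟨?_, ?_⟩).symm
  · exact ⟨endpoint A B t₀ T (bang A B T ulo uhi c), ⟨_, hbangAdm, rfl⟩, rfl⟩
  · rintro y ⟨q, ⟨u, hu, rfl⟩, rfl⟩
    exact hmain u hu
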